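/- Let the grid on X, Y be endowed with a unique sink orientation, and let v = (x, y) and w be vertices. If there is a nonempty directed path from w to v (i.e. w →⁺ v), then at least one coordinate of v belongs to the outmap of w: x ∈ Φ_X(w) or y ∈ Φ_Y(w). -/

import Mathlib

open Finset

/-- An assignment of directions to the edges of the grid on `X`, `Y`:
`out u v = true` means the edge between `u` and `v` is directed from `u` to `v`. -/
structure GridOrientation (X Y : Type) where
  out : X × Y → X × Y → Bool

namespace GridOrientation

variable {X Y : Type} [Fintype X] [Fintype Y] [DecidableEq X] [DecidableEq Y]

/-- Two distinct vertices of the grid are adjacent iff they agree in one coordinate. -/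
def Adj (u v : X × Y) : Prop := u ≠ v ∧ (u.1 = v.1 ∨ u.2 = v.2)

/-- `out` is a genuine orientation of the grid: directed edges go along edges of the
grid, and each edge gets exactly one direction. -/
def IsOrientation (o : GridOrientation X Y) : Prop :=
  (∀ u v, o.out u v = true → Adj u v) ∧
  (∀ u v, Adj u v → (o.out u v = true ↔ ¬ o.out v u = true))

/-- `v` is a sink of the face `A × B`. -/
def IsFaceSink (o : GridOrientation X Y) (A : Finset X) (B : Finset Y) (v : X × Y) : Prop :=
  v.1 ∈ A ∧ v.2 ∈ B ∧ ∀ u : X × Y, u.1 ∈ A → u.2 ∈ B → ¬ o.out v u = true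

/-- A unique sink orientation: an orientation such that every nonempty face has a
unique sink. -/
def IsUSO (o : GridOrientation X Y) : Prop :=
  o.IsOrientation ∧
  ∀ (A : Finset X) (B : Finset Y), A.Nonempty → B.Nonempty →
    ∃! v : X × Y, o.IsFaceSink A B v

/-- `Φ_X(v)`. -/
def phiX (o : GridOrientation X Y) (v : X × Y) : Finset X :=
  Finset.univ.filter fun x => o.out v (x, v.2) = true

/-- `Φ_Y(v)`. -/
def phiY (o : GridOrientation X Y) (v : X × Y) : Finset Y :=
  Finset.univ.filter fun y => o.out v (v.1, y) = true

/-- `Φ(v) = Φ_X(v) ∪ Φ_Y(v) ⊆ X ⊔ Y`. -/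
def phi (o : GridOrientation X Y) (v : X × Y) : Finset (X ⊕ Y) :=
  (o.phiX v).disjSum (o.phiY v)

/-- `u →⁺ v`: there is a nonempty directed path from `u` to `v`. -/
def Reaches (o : GridOrientation X Y) (u v : X × Y) : Prop :=
  Relation.TransGen (fun a b => o.out a b = true) u v

/-- A (global) sink: a vertex with no outgoing edge. -/
def IsSink (o : GridOrientation X Y) (v : X × Y) : Prop :=
  ∀ u : X × Y, ¬ o.out v u = true

/-- The out-neighbor `v⟨h⟩` of `v` determined by the pivot `h ∈ X ⊔ Y`. -/
def pivotStep (v : X × Y) : X ⊕ Y → X × Y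
  | Sum.inl x => (x, v.2)
  | Sum.inr y => (v.1, y)

/-- `f` is the expected-hitting-time function of the set `W`: it vanishes on `W` and
satisfies the one-step recurrence off `W`. -/
def IsHittingTimeFun (o : GridOrientation X Y) (W : Set (X × Y)) (f : X × Y → ℝ) : Prop :=
  (∀ v ∈ W, f v = 0) ∧
  ∀ v ∉ W, f v = 1 + (1 / ((o.phi v).card : ℝ)) *
      ∑ u : X × Y, (if o.out v u then f u else 0)

/-- `w` is the `i`-th milestone vertex: for `i = 0` the global sink, for `i ≥ 1` the
vertex of refined out-degree `(2^(i-1), 2^(i-1))`. -/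
def IsMilestone (o : GridOrientation X Y) (i : ℕ) (w : X × Y) : Prop :=
  if i = 0 then o.IsSink w
  else (o.phiX w).card = 2 ^ (i - 1) ∧ (o.phiY w).card = 2 ^ (i - 1)

/-- The milestone set `W^i` associated with the `i`-th milestone vertex `w`. -/
def milestoneSet (o : GridOrientation X Y) (i : ℕ) (w : X × Y) : Set (X × Y) :=
  if i = 0 then {w} else {v | o.Reaches w v}

end GridOrientation

/-- `L = 1 + ⌊log₂ min (|X|-1) (|Y|-1)⌋`, the number of milestones. -/
def gridL (X Y : Type) [Fintype X] [Fintype Y] : ℕ :=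
  1 + Nat.log 2 (min (Fintype.card X - 1) (Fintype.card Y - 1))

/-- The `n`-th harmonic number, as a real number. -/
noncomputable def harmonicR (n : ℕ) : ℝ := ∑ k ∈ Finset.range n, 1 / (k + 1)



/-- An abstract "grid order system": a family of linear orders `R b` on `α` (rows)
and `C a` on `β` (columns), satisfying the unique-sink compatibility conditions. -/
structure GOS (α β : Type) : Type where
  R : β → α → α → Prop
  C : α → β → β → Prop
  Rtrans : ∀ b a1 a2 a3, R b a1 a2 → R b a2 a3 → R b a1 a3
  Rasym : ∀ b a1 a2, R b a1 a2 → ¬ R b a2 a1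
  Rtotal : ∀ b a1 a2, a1 ≠ a2 → R b a1 a2 ∨ R b a2 a1
  Ctrans : ∀ a b1 b2 b3, C a b1 b2 → C a b2 b3 → C a b1 b3
  Casym : ∀ a b1 b2, C a b1 b2 → ¬ C a b2 b1
  Ctotal : ∀ a b1 b2, b1 ≠ b2 → C a b1 b2 ∨ C a b2 b1
  LR : ∀ a a' b b', R b a a' → R b' a' a → (C a b b' ↔ C a' b b')
  LC : ∀ b b' a a', C a b b' → C a' b' b → (R b a a' ↔ R b' a a')

namespace GOS

variable {α β : Type} (S : GOS α β)

/-- Transposed system. -/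
def transpose : GOS β α where
  R := S.C
  C := S.R
  Rtrans := S.Ctrans
  Rasym := S.Casym
  Rtotal := S.Ctotal
  Ctrans := S.Rtrans
  Casym := S.Rasym
  Ctotal := S.Rtotal
  LR := S.LC
  LC := S.LR

theorem Rne {b a a'} (h : S.R b a a') : a ≠ a' := fun he => S.Rasym b a a' h (he ▸ h)
theorem Cne {a b b'} (h : S.C a b b') : b ≠ b' := fun he => S.Casym a b b' h (he ▸ h)

/-- The key induction killing the "alternating" pattern. -/
theorem KContra (m : ℕ) (hm : 2 ≤ m) (P : ℕ → α) (Q : ℕ → β)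
    (hQm : ∀ i, Q (i + m) = Q i)
    (hH : ∀ i, S.R (Q i) (P i) (P (i+1)))
    (hV : ∀ i, S.C (P (i+1)) (Q i) (Q (i+1)))
    (hCA : ∀ j, S.C (P j) (Q j) (Q (j+1)))
    (hNRA : ∀ j, ¬ S.R (Q (j+1)) (P j) (P (j+1))) : False := by
  have hne : ∀ j, P j ≠ P (j+1) := fun j => S.Rne (hH j)
  have hK : ∀ s, ∀ i, S.C (P (i+1)) (Q (i+1)) (Q (i+s+2)) := by
    intro s
    induction s with
    | zero => intro i; exact hCA (i+1)
    | succ s ihs =>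
      intro i
      have F2 : S.R (Q (i+2)) (P (i+2)) (P (i+1)) :=
        (S.Rtotal (Q (i+2)) (P (i+1)) (P (i+2)) (hne (i+1))).resolve_left (hNRA (i+1))
      have F4 : S.C (P (i+2)) (Q (i+2)) (Q (i+s+3)) := by
        have h := ihs (i+1)
        rwa [show i+1+s+2 = i+s+3 by omega] at h
      have F3 : S.C (P (i+1)) (Q (i+1)) (Q (i+2)) := hCA (i+1)
      have F5 : S.C (P (i+2)) (Q (i+1)) (Q (i+2)) := hV (i+1)
      rcases S.Rtotal (Q (i+s+3)) (P (i+1)) (P (i+2)) (hne (i+1)) with hc | hc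
      · have h1 : S.C (P (i+1)) (Q (i+2)) (Q (i+s+3)) :=
          (S.LR (P (i+2)) (P (i+1)) (Q (i+2)) (Q (i+s+3)) F2 hc).mp F4
        exact S.Ctrans _ _ _ _ F3 h1
      · have F6 : S.C (P (i+2)) (Q (i+1)) (Q (i+s+3)) := S.Ctrans _ _ _ _ F5 F4
        exact (S.LR (P (i+1)) (P (i+2)) (Q (i+1)) (Q (i+s+3)) (hH (i+1)) hc).mpr F6
  have h := hK (m-2) 0
  rw [show 0+(m-2)+2 = 0+m by omega, hQm 0] at h
  exact S.Casym _ _ _ (hV 0) h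

/-- Splicing out one row and one column of a corner system, given the two shortcut
relations. -/
theorem splice (m : ℕ) (hm : 2 ≤ m) (P : ℕ → α) (Q : ℕ → β)
    (hPm : ∀ i, P (i + m) = P i) (hQm : ∀ i, Q (i + m) = Q i)
    (hH : ∀ i, S.R (Q i) (P i) (P (i+1)))
    (hV : ∀ i, S.C (P (i+1)) (Q i) (Q (i+1)))
    (i0 : ℕ)
    (S1 : S.R (Q i0) (P i0) (P (i0+2)))
    (S2 : S.C (P (i0+2)) (Q i0) (Q (i0+2))) :
    ∃ (P' : ℕ → α) (Q' : ℕ → β),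
      (∀ i, P' (i + (m-1)) = P' i) ∧ (∀ i, Q' (i + (m-1)) = Q' i) ∧
      (∀ i, S.R (Q' i) (P' i) (P' (i+1))) ∧ (∀ i, S.C (P' (i+1)) (Q' i) (Q' (i+1))) := by
  rcases Nat.lt_or_ge m 3 with h3 | h3
  · -- m = 2 : constant sequences
    have hm2 : m = 2 := by omega
    have e1 : P (i0+2) = P i0 := by rw [show i0+2 = i0+m by omega]; exact hPm i0
    have e2 : Q (i0+2) = Q i0 := by rw [show i0+2 = i0+m by omega]; exact hQm i0
    refine ⟨fun _ => P i0, fun _ => Q i0, fun _ => rfl, fun _ => rfl, fun _ => ?_, fun _ => ?_⟩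
    · have := S1; rwa [e1] at this
    · have := S2; rwa [e1, e2] at this
  · -- m ≥ 3
    set p := m - 1 with hp
    have hp2 : 2 ≤ p := by omega
    set σ : ℕ → ℕ := fun r => if r = 0 then 0 else r + 1 with hσ
    have hσ0 : σ 0 = 0 := by simp [hσ]
    have hσs : ∀ r, σ (r+1) = r + 2 := fun r => by simp [hσ]
    have hmod : ∀ j : ℕ, (j+1) % p = if j % p + 1 = p then 0 else j % p + 1 := by
      intro j
      have h1 : (j+1) % p = (j % p + 1) % p := by
        conv_lhs => rw [show j + 1 = (j % p + 1) + p * (j / p) by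
          rw [Nat.add_right_comm, Nat.mod_add_div j p]]
        rw [Nat.add_mul_mod_self_left]
      by_cases h : j % p + 1 = p
      · rw [if_pos h, h1, h, Nat.mod_self]
      · rw [if_neg h, h1, Nat.mod_eq_of_lt (by have := Nat.mod_lt j (show 0 < p by omega); omega)]
    refine ⟨fun j => P (i0 + σ (j % p)), fun j => Q (i0 + σ (j % p)), ?_, ?_, ?_, ?_⟩
    · intro i; simp only [Nat.add_mod_right]
    · intro i; simp only [Nat.add_mod_right]
    · intro j
      show S.R (Q (i0 + σ (j % p))) (P (i0 + σ (j % p))) (P (i0 + σ ((j+1) % p)))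
      rw [hmod j]
      rcases Nat.eq_zero_or_pos (j % p) with h0 | hpos
      · rw [h0, if_neg (by omega), hσ0]
        rw [show (0:ℕ)+1 = 0+1 from rfl, hσs 0]
        simpa using S1
      · obtain ⟨s, hjp⟩ := Nat.exists_eq_succ_of_ne_zero (Nat.pos_iff_ne_zero.mp hpos)
        rw [hjp, hσs s]
        by_cases hlast : s + 1 + 1 = p
        · rw [if_pos hlast, hσ0]
          have h := hH (i0+s+2)
          rw [show i0+s+2+1 = i0+m by omega, hPm i0] at h
          simpa [Nat.add_assoc] using h
        · rw [if_neg hlast, hσs (s+1)]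
          have h := hH (i0+s+2)
          simpa [Nat.add_assoc] using h
    · intro j
      show S.C (P (i0 + σ ((j+1) % p))) (Q (i0 + σ (j % p))) (Q (i0 + σ ((j+1) % p)))
      rw [hmod j]
      rcases Nat.eq_zero_or_pos (j % p) with h0 | hpos
      · rw [h0, if_neg (by omega), hσ0]
        rw [show (0:ℕ)+1 = 0+1 from rfl, hσs 0]
        simpa using S2
      · obtain ⟨s, hjp⟩ := Nat.exists_eq_succ_of_ne_zero (Nat.pos_iff_ne_zero.mp hpos)
        rw [hjp, hσs s]
        by_cases hlast : s + 1 + 1 = p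
        · rw [if_pos hlast, hσ0]
          have h := hV (i0+s+2)
          rw [show i0+s+2+1 = i0+m by omega, hPm i0, hQm i0] at h
          simpa [Nat.add_assoc] using h
        · rw [if_neg hlast, hσs (s+1)]
          have h := hV (i0+s+2)
          simpa [Nat.add_assoc] using h

/-- AA-reduction: produces a spliced system for the transposed structure. -/
theorem reduceAA (m : ℕ) (hm : 2 ≤ m) (P : ℕ → α) (Q : ℕ → β)
    (hPm : ∀ i, P (i + m) = P i) (hQm : ∀ i, Q (i + m) = Q i)
    (hH : ∀ i, S.R (Q i) (P i) (P (i+1)))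
    (hV : ∀ i, S.C (P (i+1)) (Q i) (Q (i+1)))
    (i : ℕ)
    (hcb : S.C (P (i+2)) (Q i) (Q (i+1)))
    (hra1 : S.R (Q (i+2)) (P (i+1)) (P (i+2)))
    (hnrb : ¬ S.R (Q i) (P (i+1)) (P (i+2))) :
    ∃ (P' : ℕ → β) (Q' : ℕ → α),
      (∀ k, P' (k + (m-1)) = P' k) ∧ (∀ k, Q' (k + (m-1)) = Q' k) ∧
      (∀ k, S.transpose.R (Q' k) (P' k) (P' (k+1))) ∧
      (∀ k, S.transpose.C (P' (k+1)) (Q' k) (Q' (k+1))) := by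
  have W : S.C (P (i+2)) (Q i) (Q (i+2)) := S.Ctrans _ _ _ _ hcb (hV (i+1))
  have hne : P (i+1) ≠ P (i+2) := S.Rne (hH (i+1))
  have hrb' : S.R (Q i) (P (i+2)) (P (i+1)) := (S.Rtotal _ _ _ hne).resolve_left hnrb
  have T1 : S.C (P (i+1)) (Q i) (Q (i+2)) :=
    (S.LR (P (i+2)) (P (i+1)) (Q i) (Q (i+2)) hrb' hra1).mp W
  have T2 : S.R (Q (i+2)) (P (i+1)) (P (i+3)) := S.Rtrans _ _ _ _ hra1 (hH (i+2))
  exact S.transpose.splice m hm Q (fun k => P (k+1)) hQm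
    (fun k => by show P (k+m+1) = P (k+1); rw [show k+m+1 = k+1+m by omega]; exact hPm (k+1))
    (fun k => hV k) (fun k => hH (k+1)) i T1 T2

/-- BB-reduction: produces a spliced system for the same structure. -/
theorem reduceBB (m : ℕ) (hm : 2 ≤ m) (P : ℕ → α) (Q : ℕ → β)
    (hPm : ∀ i, P (i + m) = P i) (hQm : ∀ i, Q (i + m) = Q i)
    (hH : ∀ i, S.R (Q i) (P i) (P (i+1)))
    (hV : ∀ i, S.C (P (i+1)) (Q i) (Q (i+1)))
    (i : ℕ)
    (hrb : S.R (Q i) (P (i+1)) (P (i+2)))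
    (hca1 : S.C (P (i+1)) (Q (i+1)) (Q (i+2)))
    (hnra1 : ¬ S.R (Q (i+2)) (P (i+1)) (P (i+2))) :
    ∃ (P' : ℕ → α) (Q' : ℕ → β),
      (∀ k, P' (k + (m-1)) = P' k) ∧ (∀ k, Q' (k + (m-1)) = Q' k) ∧
      (∀ k, S.R (Q' k) (P' k) (P' (k+1))) ∧ (∀ k, S.C (P' (k+1)) (Q' k) (Q' (k+1))) := by
  have S1 : S.R (Q i) (P i) (P (i+2)) := S.Rtrans _ _ _ _ (hH i) hrb
  have left : S.C (P (i+1)) (Q i) (Q (i+2)) := S.Ctrans _ _ _ _ (hV i) hca1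
  have hne : P (i+1) ≠ P (i+2) := S.Rne (hH (i+1))
  have hra1' : S.R (Q (i+2)) (P (i+2)) (P (i+1)) := (S.Rtotal _ _ _ hne).resolve_left hnra1
  have S2 : S.C (P (i+2)) (Q i) (Q (i+2)) :=
    (S.LR (P (i+1)) (P (i+2)) (Q i) (Q (i+2)) hrb hra1').mp left
  exact S.splice m hm P Q hPm hQm hH hV i S1 S2

end GOS

/-- No periodic "corner system" exists in a grid order system. -/
theorem GOS.noSystem : ∀ (m : ℕ) (α β : Type) (S : GOS α β) (P : ℕ → α) (Q : ℕ → β),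
    1 ≤ m →
    (∀ i, P (i + m) = P i) → (∀ i, Q (i + m) = Q i) →
    (∀ i, S.R (Q i) (P i) (P (i+1))) → (∀ i, S.C (P (i+1)) (Q i) (Q (i+1))) → False := by
  intro m
  induction m using Nat.strong_induction_on with
  | _ m ih =>
  intro α β S P Q hm hPm hQm hH hV
  rcases Nat.lt_or_ge m 2 with h2 | h2
  · have h1 : P 1 = P 0 := by
      have h := hPm 0
      rw [show (0:ℕ) + m = 1 by omega] at h
      simpa using h
    have h := hH 0
    rw [h1] at h
    exact S.Rasym _ _ _ h h
  have hQtm : ∀ k, P (k + m + 1) = P (k+1) := fun k => by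
    rw [show k+m+1 = k+1+m by omega]; exact hPm (k+1)
  have finish : ∀ (α' β' : Type) (S' : GOS α' β'),
      (∃ (P' : ℕ → α') (Q' : ℕ → β'),
        (∀ k, P' (k + (m-1)) = P' k) ∧ (∀ k, Q' (k + (m-1)) = Q' k) ∧
        (∀ k, S'.R (Q' k) (P' k) (P' (k+1))) ∧ (∀ k, S'.C (P' (k+1)) (Q' k) (Q' (k+1)))) →
      False := by
    rintro α' β' S' ⟨P', Q', h1, h2', h3, h4⟩
    exact ih (m-1) (by omega) α' β' S' P' Q' (by omega) h1 h2' h3 h4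
  by_cases hc1 : ∃ i, S.C (P (i+2)) (Q i) (Q (i+1)) ∧ S.R (Q i) (P (i+1)) (P (i+2))
  · obtain ⟨i, hcb, hrb⟩ := hc1
    exact finish α β S (S.splice m h2 P Q hPm hQm hH hV i
      (S.Rtrans _ _ _ _ (hH i) hrb) (S.Ctrans _ _ _ _ hcb (hV (i+1))))
  by_cases hc2 : ∃ j, S.R (Q (j+1)) (P j) (P (j+1)) ∧ S.C (P j) (Q j) (Q (j+1))
  · obtain ⟨j, hra, hca⟩ := hc2
    set i := j + m - 1 with hidef
    have e1 : P (j+m) = P j := hPm j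
    have e2 : Q (j+1+m) = Q (j+1) := hQm (j+1)
    have e3 : Q (j+m) = Q j := hQm j
    have hca' : S.C (P (i+1)) (Q (i+1)) (Q (i+2)) := by
      rw [show i+1 = j+m by omega, show i+2 = j+1+m by omega, e1, e3, e2]
      exact hca
    have S1t : S.C (P (i+1)) (Q i) (Q (i+2)) := S.Ctrans _ _ _ _ (hV i) hca'
    have e4 : P (j+1+m) = P (j+1) := hPm (j+1)
    have hra' : S.R (Q (i+2)) (P (i+1)) (P (i+2)) := by
      rw [show i+1 = j+m by omega, show i+2 = j+1+m by omega, e1, e2, e4]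
      exact hra
    have S2t : S.R (Q (i+2)) (P (i+1)) (P (i+3)) := S.Rtrans _ _ _ _ hra' (hH (i+2))
    exact finish β α S.transpose (S.transpose.splice m h2 Q (fun k => P (k+1)) hQm hQtm
      (fun k => hV k) (fun k => hH (k+1)) i S1t S2t)
  by_cases hc3 : ∃ i, S.C (P (i+2)) (Q i) (Q (i+1)) ∧ S.R (Q (i+2)) (P (i+1)) (P (i+2))
  · obtain ⟨i, hcb, hra1⟩ := hc3
    have hnrb : ¬ S.R (Q i) (P (i+1)) (P (i+2)) := fun hrb => hc1 ⟨i, hcb, hrb⟩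
    exact finish β α S.transpose (S.reduceAA m h2 P Q hPm hQm hH hV i hcb hra1 hnrb)
  by_cases hc4 : ∃ i, S.R (Q (i+2)) (P (i+1)) (P (i+2)) ∧ S.C (P (i+3)) (Q (i+1)) (Q (i+2))
  · obtain ⟨i, hra1, hcb1⟩ := hc4
    have hnca1 : ¬ S.C (P (i+1)) (Q (i+1)) (Q (i+2)) := fun hca => hc2 ⟨i+1, hra1, hca⟩
    exact finish α β S.transpose.transpose
      (S.transpose.reduceAA m h2 Q (fun k => P (k+1)) hQm hQtm
        (fun k => hV k) (fun k => hH (k+1)) i hra1 hcb1 hnca1)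
  by_cases hc5 : ∃ i, S.R (Q i) (P (i+1)) (P (i+2)) ∧ S.C (P (i+1)) (Q (i+1)) (Q (i+2))
  · obtain ⟨i, hrb, hca1⟩ := hc5
    have hnra1 : ¬ S.R (Q (i+2)) (P (i+1)) (P (i+2)) := fun hra => hc2 ⟨i+1, hra, hca1⟩
    exact finish α β S (S.reduceBB m h2 P Q hPm hQm hH hV i hrb hca1 hnra1)
  by_cases hc6 : ∃ i, S.C (P (i+1)) (Q (i+1)) (Q (i+2)) ∧ S.R (Q (i+1)) (P (i+2)) (P (i+3))
  · obtain ⟨i, hca1, hrb1⟩ := hc6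
    have hncb1 : ¬ S.C (P (i+3)) (Q (i+1)) (Q (i+2)) := fun hcb => hc1 ⟨i+1, hcb, hrb1⟩
    exact finish β α S.transpose
      (S.transpose.reduceBB m h2 Q (fun k => P (k+1)) hQm hQtm
        (fun k => hV k) (fun k => hH (k+1)) i hca1 hrb1 hncb1)
  have hD1 : ∀ j, S.R (Q (j+1)) (P j) (P (j+1)) ∨ S.C (P j) (Q j) (Q (j+1)) := by
    intro j
    by_cases hra : S.R (Q (j+1)) (P j) (P (j+1))
    · exact Or.inl hra
    · right
      have hra' : S.R (Q (j+1)) (P (j+1)) (P j) :=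
        (S.Rtotal _ _ _ (S.Rne (hH j))).resolve_left hra
      exact (S.LR (P j) (P (j+1)) (Q j) (Q (j+1)) (hH j) hra').mpr (hV j)
  have hD2 : ∀ i, S.C (P (i+2)) (Q i) (Q (i+1)) ∨ S.R (Q i) (P (i+1)) (P (i+2)) := by
    intro i
    by_cases hcb : S.C (P (i+2)) (Q i) (Q (i+1))
    · exact Or.inl hcb
    · right
      have hcb' : S.C (P (i+2)) (Q (i+1)) (Q i) :=
        (S.Ctotal _ _ _ (S.Cne (hV i))).resolve_left hcb
      exact (S.LC (Q i) (Q (i+1)) (P (i+1)) (P (i+2)) (hV i) hcb').mpr (hH (i+1))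
  by_cases hstart : S.C (P 1) (Q 1) (Q 2)
  · have step : ∀ j, 1 ≤ j → S.C (P j) (Q j) (Q (j+1)) → S.C (P (j+1)) (Q (j+1)) (Q (j+2)) := by
      intro j hj hca
      have hnrb : ¬ S.R (Q j) (P (j+1)) (P (j+2)) := by
        intro hrb
        refine hc6 ⟨j-1, ?_, ?_⟩
        · rw [show j-1+1 = j by omega, show j-1+2 = j+1 by omega]; exact hca
        · rw [show j-1+1 = j by omega, show j-1+2 = j+1 by omega, show j-1+3 = j+2 by omega]
          exact hrb
      have hcb : S.C (P (j+2)) (Q j) (Q (j+1)) := (hD2 j).resolve_right hnrb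
      have hnra : ¬ S.R (Q (j+2)) (P (j+1)) (P (j+2)) := fun hra => hc3 ⟨j, hcb, hra⟩
      exact (hD1 (j+1)).resolve_left hnra
    have hge : ∀ j, S.C (P (j+1)) (Q (j+1)) (Q (j+2)) := by
      intro j
      induction j with
      | zero => exact hstart
      | succ k ihk => exact step (k+1) (by omega) ihk
    have hallCA : ∀ j, S.C (P j) (Q j) (Q (j+1)) := by
      intro j
      cases j with
      | succ k => exact hge k
      | zero =>
        have h := hge (m-1)
        rw [show m-1+1 = 0+m by omega, show m-1+2 = 1+m by omega, hPm 0, hQm 0, hQm 1] at h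
        simpa using h
    have hallNRA : ∀ j, ¬ S.R (Q (j+1)) (P j) (P (j+1)) := fun j hra => hc2 ⟨j, hra, hallCA j⟩
    exact S.KContra m h2 P Q hQm hH hV hallCA hallNRA
  · have hra1 : S.R (Q 2) (P 1) (P 2) := (hD1 1).resolve_right hstart
    have step : ∀ j, S.R (Q (j+2)) (P (j+1)) (P (j+2)) →
        S.R (Q (j+3)) (P (j+2)) (P (j+3)) ∧ S.R (Q (j+1)) (P (j+2)) (P (j+3)) := by
      intro j hra
      have hncb : ¬ S.C (P (j+3)) (Q (j+1)) (Q (j+2)) := fun hcb => hc4 ⟨j, hra, hcb⟩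
      have hrb : S.R (Q (j+1)) (P (j+2)) (P (j+3)) := (hD2 (j+1)).resolve_left hncb
      have hnca : ¬ S.C (P (j+2)) (Q (j+2)) (Q (j+3)) := fun hca => hc5 ⟨j+1, hrb, hca⟩
      exact ⟨(hD1 (j+2)).resolve_right hnca, hrb⟩
    have hgeRA : ∀ j, S.R (Q (j+2)) (P (j+1)) (P (j+2)) := by
      intro j
      induction j with
      | zero => exact hra1
      | succ k ihk => exact (step k ihk).1
    have hgeRB : ∀ j, S.R (Q (j+1)) (P (j+2)) (P (j+3)) := fun j => (step j (hgeRA j)).2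
    have hallRB : ∀ i, S.R (Q i) (P (i+1)) (P (i+2)) := by
      intro i
      cases i with
      | succ k => exact hgeRB k
      | zero =>
        have h := hgeRB (m-1)
        rw [show m-1+1 = 0+m by omega, show m-1+2 = 1+m by omega,
          show m-1+3 = 2+m by omega, hQm 0, hPm 1, hPm 2] at h
        simpa using h
    have hallNCB : ∀ i, ¬ S.C (P (i+2)) (Q i) (Q (i+1)) := fun i hcb => hc3 ⟨i, hcb, hgeRA i⟩
    exact S.transpose.KContra m h2 Q (fun k => P (k+1)) hQtm
      (fun k => hV k) (fun k => hH (k+1)) hallRB hallNCB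

namespace GridOrientation
set_option linter.unusedSectionVars false

variable {X Y : Type} [Fintype X] [Fintype Y] [DecidableEq X] [DecidableEq Y]
variable (o : GridOrientation X Y)

lemma out_irrefl (hO : o.IsOrientation) (v : X × Y) : ¬ o.out v v = true :=
  fun h => (hO.1 v v h).1 rfl

lemma out_asymm (hO : o.IsOrientation) {u v : X × Y} (h : o.out u v = true) :
    ¬ o.out v u = true := (hO.2 u v (hO.1 u v h)).mp h

lemma adj_symm {u v : X × Y} (h : Adj u v) : Adj v u :=
  ⟨fun e => h.1 e.symm, h.2.imp Eq.symm Eq.symm⟩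

lemma out_total (hO : o.IsOrientation) {u v : X × Y} (h : Adj u v)
    (h2 : ¬ o.out u v = true) : o.out v u = true :=
  (hO.2 v u (adj_symm h)).mpr h2

lemma mk_ne_left {a a' : X} {b : Y} (h : a ≠ a') : ((a,b) : X × Y) ≠ (a',b) :=
  fun hc => h (congrArg Prod.fst hc)

lemma mk_ne_right {a : X} {b b' : Y} (h : b ≠ b') : ((a,b) : X × Y) ≠ (a,b') :=
  fun hc => h (congrArg Prod.snd hc)

lemma row_trans (huso : o.IsUSO) (b : Y) (a1 a2 a3 : X)
    (h12 : o.out (a1,b) (a2,b) = true) (h23 : o.out (a2,b) (a3,b) = true) :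
    o.out (a1,b) (a3,b) = true := by
  have hO := huso.1
  by_contra hc
  have hne13 : a1 ≠ a3 := by
    rintro rfl
    exact o.out_asymm hO h12 h23
  have h31 : o.out (a3,b) (a1,b) = true :=
    o.out_total hO ⟨mk_ne_left hne13, Or.inr rfl⟩ hc
  obtain ⟨s, hs, -⟩ := huso.2 {a1,a2,a3} {b} ⟨a1, by simp⟩ ⟨b, by simp⟩
  obtain ⟨hs1, hs2, hs3⟩ := hs
  have hsb : s.2 = b := by simpa using hs2
  have hseq : s = (s.1, b) := by rw [← hsb]
  rcases (by simpa using hs1 : s.1 = a1 ∨ s.1 = a2 ∨ s.1 = a3) with h|h|h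
  · exact hs3 (a2,b) (by simp) (by simp) (by rw [hseq, h]; exact h12)
  · exact hs3 (a3,b) (by simp) (by simp) (by rw [hseq, h]; exact h23)
  · exact hs3 (a1,b) (by simp) (by simp) (by rw [hseq, h]; exact h31)

lemma col_trans (huso : o.IsUSO) (a : X) (b1 b2 b3 : Y)
    (h12 : o.out (a,b1) (a,b2) = true) (h23 : o.out (a,b2) (a,b3) = true) :
    o.out (a,b1) (a,b3) = true := by
  have hO := huso.1
  by_contra hc
  have hne13 : b1 ≠ b3 := by
    rintro rfl
    exact o.out_asymm hO h12 h23
  have h31 : o.out (a,b3) (a,b1) = true :=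
    o.out_total hO ⟨mk_ne_right hne13, Or.inl rfl⟩ hc
  obtain ⟨s, hs, -⟩ := huso.2 {a} {b1,b2,b3} ⟨a, by simp⟩ ⟨b1, by simp⟩
  obtain ⟨hs1, hs2, hs3⟩ := hs
  have hsa : s.1 = a := by simpa using hs1
  have hseq : s = (a, s.2) := by rw [← hsa]
  rcases (by simpa using hs2 : s.2 = b1 ∨ s.2 = b2 ∨ s.2 = b3) with h|h|h
  · exact hs3 (a,b2) (by simp) (by simp) (by rw [hseq, h]; exact h12)
  · exact hs3 (a,b3) (by simp) (by simp) (by rw [hseq, h]; exact h23)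
  · exact hs3 (a,b1) (by simp) (by simp) (by rw [hseq, h]; exact h31)

lemma lr (huso : o.IsUSO) (a a' : X) (b b' : Y)
    (h1 : o.out (a,b) (a',b) = true) (h2 : o.out (a',b') (a,b') = true) :
    (o.out (a,b) (a,b') = true ↔ o.out (a',b) (a',b') = true) := by
  have hO := huso.1
  have hnea : a ≠ a' := fun h => (hO.1 _ _ h1).1 (by rw [h])
  constructor
  · intro hc
    by_contra hc'
    have hneb : b ≠ b' := fun h => o.out_irrefl hO (a,b) (by rw [← h] at hc; exact hc)
    have h4 : o.out (a',b') (a',b) = true :=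
      o.out_total hO ⟨mk_ne_right hneb, Or.inl rfl⟩ hc'
    obtain ⟨s, -, hu⟩ := huso.2 {a,a'} {b,b'} ⟨a, by simp⟩ ⟨b, by simp⟩
    have hsk1 : o.IsFaceSink {a,a'} {b,b'} (a,b') := by
      refine ⟨by simp, by simp, ?_⟩
      rintro ⟨u1,u2⟩ hu1 hu2
      simp only [Finset.mem_insert, Finset.mem_singleton] at hu1 hu2
      rcases hu1 with rfl|rfl <;> rcases hu2 with rfl|rfl
      · exact o.out_asymm hO hc
      · exact o.out_irrefl hO _
      · intro hout
        rcases (hO.1 _ _ hout).2 with h|h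
        · exact hnea h
        · exact hneb h.symm
      · exact o.out_asymm hO h2
    have hsk2 : o.IsFaceSink {a,a'} {b,b'} (a',b) := by
      refine ⟨by simp, by simp, ?_⟩
      rintro ⟨u1,u2⟩ hu1 hu2
      simp only [Finset.mem_insert, Finset.mem_singleton] at hu1 hu2
      rcases hu1 with rfl|rfl <;> rcases hu2 with rfl|rfl
      · exact o.out_asymm hO h1
      · intro hout
        rcases (hO.1 _ _ hout).2 with h|h
        · exact hnea h.symm
        · exact hneb h
      · exact o.out_irrefl hO _
      · exact o.out_asymm hO h4
    have e1 := hu _ hsk1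
    have e2 := hu _ hsk2
    rw [← e2] at e1
    exact hnea (congrArg Prod.fst e1)
  · intro hc
    by_contra hc'
    have hneb : b ≠ b' := fun h => o.out_irrefl hO (a',b) (by rw [← h] at hc; exact hc)
    have h4 : o.out (a,b') (a,b) = true :=
      o.out_total hO ⟨mk_ne_right hneb, Or.inl rfl⟩ hc'
    obtain ⟨s, hs, -⟩ := huso.2 {a,a'} {b,b'} ⟨a, by simp⟩ ⟨b, by simp⟩
    obtain ⟨hs1, hs2, hs3⟩ := hs
    rcases (by simpa using hs1 : s.1 = a ∨ s.1 = a') with ha|ha <;>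
      rcases (by simpa using hs2 : s.2 = b ∨ s.2 = b') with hb|hb
    · exact hs3 (a',b) (by simp) (by simp)
        (by rw [show s = (a,b) from Prod.ext ha hb]; exact h1)
    · exact hs3 (a,b) (by simp) (by simp)
        (by rw [show s = (a,b') from Prod.ext ha hb]; exact h4)
    · exact hs3 (a',b') (by simp) (by simp)
        (by rw [show s = (a',b) from Prod.ext ha hb]; exact hc)
    · exact hs3 (a,b') (by simp) (by simp)
        (by rw [show s = (a',b') from Prod.ext ha hb]; exact h2)

lemma lc (huso : o.IsUSO) (b b' : Y) (a a' : X)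
    (h1 : o.out (a,b) (a,b') = true) (h2 : o.out (a',b') (a',b) = true) :
    (o.out (a,b) (a',b) = true ↔ o.out (a,b') (a',b') = true) := by
  have hO := huso.1
  have hneb : b ≠ b' := fun h => (hO.1 _ _ h1).1 (by rw [h])
  constructor
  · intro hc
    by_contra hc'
    have hnea : a ≠ a' := fun h => o.out_irrefl hO (a,b) (by rw [← h] at hc; exact hc)
    have h4 : o.out (a',b') (a,b') = true :=
      o.out_total hO ⟨mk_ne_left hnea, Or.inr rfl⟩ hc'
    obtain ⟨s, -, hu⟩ := huso.2 {a,a'} {b,b'} ⟨a, by simp⟩ ⟨b, by simp⟩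
    have hsk1 : o.IsFaceSink {a,a'} {b,b'} (a',b) := by
      refine ⟨by simp, by simp, ?_⟩
      rintro ⟨u1,u2⟩ hu1 hu2
      simp only [Finset.mem_insert, Finset.mem_singleton] at hu1 hu2
      rcases hu1 with rfl|rfl <;> rcases hu2 with rfl|rfl
      · exact o.out_asymm hO hc
      · intro hout
        rcases (hO.1 _ _ hout).2 with h|h
        · exact hnea h.symm
        · exact hneb h
      · exact o.out_irrefl hO _
      · exact o.out_asymm hO h2
    have hsk2 : o.IsFaceSink {a,a'} {b,b'} (a,b') := by
      refine ⟨by simp, by simp, ?_⟩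
      rintro ⟨u1,u2⟩ hu1 hu2
      simp only [Finset.mem_insert, Finset.mem_singleton] at hu1 hu2
      rcases hu1 with rfl|rfl <;> rcases hu2 with rfl|rfl
      · exact o.out_asymm hO h1
      · exact o.out_irrefl hO _
      · intro hout
        rcases (hO.1 _ _ hout).2 with h|h
        · exact hnea h
        · exact hneb h.symm
      · exact o.out_asymm hO h4
    have e1 := hu _ hsk1
    have e2 := hu _ hsk2
    rw [← e2] at e1
    exact hnea (congrArg Prod.fst e1).symm
  · intro hc
    by_contra hc'
    have hnea : a ≠ a' := fun h => o.out_irrefl hO (a,b') (by rw [← h] at hc; exact hc)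
    have h4 : o.out (a',b) (a,b) = true :=
      o.out_total hO ⟨mk_ne_left hnea, Or.inr rfl⟩ hc'
    obtain ⟨s, hs, -⟩ := huso.2 {a,a'} {b,b'} ⟨a, by simp⟩ ⟨b, by simp⟩
    obtain ⟨hs1, hs2, hs3⟩ := hs
    rcases (by simpa using hs1 : s.1 = a ∨ s.1 = a') with ha|ha <;>
      rcases (by simpa using hs2 : s.2 = b ∨ s.2 = b') with hb|hb
    · exact hs3 (a,b') (by simp) (by simp)
        (by rw [show s = (a,b) from Prod.ext ha hb]; exact h1)
    · exact hs3 (a',b') (by simp) (by simp)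
        (by rw [show s = (a,b') from Prod.ext ha hb]; exact hc)
    · exact hs3 (a,b) (by simp) (by simp)
        (by rw [show s = (a',b) from Prod.ext ha hb]; exact h4)
    · exact hs3 (a',b) (by simp) (by simp)
        (by rw [show s = (a',b') from Prod.ext ha hb]; exact h2)

/-- The grid order system associated with a USO. -/
def mkGOS (huso : o.IsUSO) : GOS X Y where
  R := fun b a a' => o.out (a,b) (a',b) = true
  C := fun a b b' => o.out (a,b) (a,b') = true
  Rtrans := fun b a1 a2 a3 h1 h2 => o.row_trans huso b a1 a2 a3 h1 h2
  Rasym := fun _ _ _ h => o.out_asymm huso.1 h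
  Rtotal := fun b a1 a2 hne => by
    by_cases h : o.out (a1,b) (a2,b) = true
    · exact Or.inl h
    · exact Or.inr (o.out_total huso.1 ⟨mk_ne_left hne, Or.inr rfl⟩ h)
  Ctrans := fun a b1 b2 b3 h1 h2 => o.col_trans huso a b1 b2 b3 h1 h2
  Casym := fun _ _ _ h => o.out_asymm huso.1 h
  Ctotal := fun a b1 b2 hne => by
    by_cases h : o.out (a,b1) (a,b2) = true
    · exact Or.inl h
    · exact Or.inr (o.out_total huso.1 ⟨mk_ne_right hne, Or.inl rfl⟩ h)
  LR := fun a a' b b' h1 h2 => o.lr huso a a' b b' h1 h2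
  LC := fun b b' a a' h1 h2 => o.lc huso b b' a a' h1 h2

end GridOrientation

namespace GridOrientation
set_option linter.unusedSectionVars false

variable {X Y : Type} [Fintype X] [Fintype Y] [DecidableEq X] [DecidableEq Y]
variable (o : GridOrientation X Y)

lemma noWalk (huso : o.IsUSO) : ∀ n, 1 ≤ n → ∀ f : ℕ → X × Y,
    (∀ i, o.out (f i) (f (i+1)) = true) → (∀ i, f (i + n) = f i) → False := by
  have hO := huso.1
  intro n
  induction n using Nat.strong_induction_on with
  | _ n ihn =>
  intro hn f hE hper
  rcases Nat.lt_or_ge n 3 with h3 | h3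
  · rcases Nat.lt_or_ge n 2 with h2 | h2
    · have h : o.out (f 0) (f 1) = true := hE 0
      rw [show (1:ℕ) = 0 + n by omega, hper 0] at h
      exact o.out_irrefl hO _ h
    · have h0 : o.out (f 0) (f 1) = true := hE 0
      have h1 : o.out (f 1) (f 2) = true := hE 1
      rw [show (2:ℕ) = 0 + n by omega, hper 0] at h1
      exact o.out_asymm hO h0 h1
  by_cases hpar : ∃ i, ((f i).2 = (f (i+1)).2 ∧ (f (i+1)).2 = (f (i+2)).2) ∨
                       ((f i).1 = (f (i+1)).1 ∧ (f (i+1)).1 = (f (i+2)).1)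
  · obtain ⟨i, hi⟩ := hpar
    have hedge : o.out (f i) (f (i+2)) = true := by
      rcases hi with ⟨hb1, hb2⟩ | ⟨ha1, ha2⟩
      · have e1 : o.out ((f i).1, (f i).2) ((f (i+1)).1, (f i).2) = true := by
          have h' : ((f (i+1)).1, (f i).2) = f (i+1) := by rw [hb1]
          rw [h']; exact hE i
        have e2 : o.out ((f (i+1)).1, (f i).2) ((f (i+2)).1, (f i).2) = true := by
          have h1' : ((f (i+1)).1, (f i).2) = f (i+1) := by rw [hb1]
          have h2' : ((f (i+2)).1, (f i).2) = f (i+2) := by rw [hb1, hb2]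
          rw [h1', h2']; exact hE (i+1)
        have e3 := o.row_trans huso (f i).2 (f i).1 (f (i+1)).1 (f (i+2)).1 e1 e2
        have h2' : ((f (i+2)).1, (f i).2) = f (i+2) := by rw [hb1, hb2]
        rw [h2'] at e3
        exact e3
      · have e1 : o.out ((f i).1, (f i).2) ((f i).1, (f (i+1)).2) = true := by
          have h' : ((f i).1, (f (i+1)).2) = f (i+1) := by rw [ha1]
          rw [h']; exact hE i
        have e2 : o.out ((f i).1, (f (i+1)).2) ((f i).1, (f (i+2)).2) = true := by
          have h1' : ((f i).1, (f (i+1)).2) = f (i+1) := by rw [ha1]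
          have h2' : ((f i).1, (f (i+2)).2) = f (i+2) := by rw [ha1, ha2]
          rw [h1', h2']; exact hE (i+1)
        have e3 := o.col_trans huso (f i).1 (f i).2 (f (i+1)).2 (f (i+2)).2 e1 e2
        have h2' : ((f i).1, (f (i+2)).2) = f (i+2) := by rw [ha1, ha2]
        rw [h2'] at e3
        exact e3
    set p := n - 1 with hpdef
    have hp2 : 2 ≤ p := by omega
    set σ : ℕ → ℕ := fun r => if r = 0 then 0 else r + 1 with hσ
    have hσ0 : σ 0 = 0 := by simp [hσ]
    have hσs : ∀ r, σ (r+1) = r + 2 := fun r => by simp [hσ]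
    have hmod : ∀ j : ℕ, (j+1) % p = if j % p + 1 = p then 0 else j % p + 1 := by
      intro j
      have h1 : (j+1) % p = (j % p + 1) % p := by
        conv_lhs => rw [show j + 1 = (j % p + 1) + p * (j / p) by
          rw [Nat.add_right_comm, Nat.mod_add_div j p]]
        rw [Nat.add_mul_mod_self_left]
      by_cases h : j % p + 1 = p
      · rw [if_pos h, h1, h, Nat.mod_self]
      · rw [if_neg h, h1, Nat.mod_eq_of_lt (by have := Nat.mod_lt j (show 0 < p by omega); omega)]
    refine ihn p (by omega) (by omega) (fun j => f (i + σ (j % p))) ?_ ?_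
    · intro j
      show o.out (f (i + σ (j % p))) (f (i + σ ((j+1) % p))) = true
      rw [hmod j]
      rcases Nat.eq_zero_or_pos (j % p) with h0 | hpos
      · rw [h0, if_neg (by omega), hσ0, show (0:ℕ)+1 = 0+1 from rfl, hσs 0]
        simpa using hedge
      · obtain ⟨s, hjp⟩ := Nat.exists_eq_succ_of_ne_zero (Nat.pos_iff_ne_zero.mp hpos)
        rw [hjp, hσs s]
        by_cases hlast : s + 1 + 1 = p
        · rw [if_pos hlast, hσ0]
          have h := hE (i+s+2)
          rw [show i+s+2+1 = i + n by omega, hper i] at h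
          simpa [Nat.add_assoc] using h
        · rw [if_neg hlast, hσs (s+1)]
          have h := hE (i+s+2)
          simpa [Nat.add_assoc] using h
    · intro j
      show f (i + σ ((j + p) % p)) = f (i + σ (j % p))
      rw [Nat.add_mod_right]
  · have hnH : ∀ i, ¬((f i).2 = (f (i+1)).2 ∧ (f (i+1)).2 = (f (i+2)).2) :=
      fun i h => hpar ⟨i, Or.inl h⟩
    have hnV : ∀ i, ¬((f i).1 = (f (i+1)).1 ∧ (f (i+1)).1 = (f (i+2)).1) :=
      fun i h => hpar ⟨i, Or.inr h⟩
    have hHV : ∀ i, ((f i).2 = (f (i+1)).2 ∧ (f i).1 ≠ (f (i+1)).1) ∨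
                    ((f i).1 = (f (i+1)).1 ∧ (f i).2 ≠ (f (i+1)).2) := by
      intro i
      have hA := hO.1 _ _ (hE i)
      rcases hA.2 with h | h
      · exact Or.inr ⟨h, fun h2 => hA.1 (Prod.ext h h2)⟩
      · exact Or.inl ⟨h, fun h1 => hA.1 (Prod.ext h1 h)⟩
    have hstep : ∀ i, (f i).2 = (f (i+1)).2 →
        (f (i+1)).1 = (f (i+2)).1 ∧ (f (i+2)).2 = (f (i+3)).2 := by
      intro i hH0
      have h1 : (f (i+1)).1 = (f (i+2)).1 := by
        rcases hHV (i+1) with ⟨hb, -⟩ | ⟨ha, -⟩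
        · exact absurd ⟨hH0, hb⟩ (hnH i)
        · exact ha
      have h2 : (f (i+2)).2 = (f (i+3)).2 := by
        rcases hHV (i+2) with ⟨hb, -⟩ | ⟨ha, -⟩
        · exact hb
        · exact absurd ⟨h1, ha⟩ (hnV (i+1))
      exact ⟨h1, h2⟩
    have main : ∀ g : ℕ → X × Y, (∀ i, o.out (g i) (g (i+1)) = true) →
        (∀ i, g (i + n) = g i) →
        (∀ i, (g i).2 = (g (i+1)).2 → (g (i+1)).1 = (g (i+2)).1 ∧ (g (i+2)).2 = (g (i+3)).2) →
        (g 0).2 = (g 1).2 → False := by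
      intro g hgE hgper hgstep hg0
      have hpar2 : ∀ i, (g (2*i)).2 = (g (2*i+1)).2 ∧ (g (2*i+1)).1 = (g (2*i+2)).1 := by
        intro i
        induction i with
        | zero => exact ⟨hg0, (hgstep 0 hg0).1⟩
        | succ k ihk =>
          have h2 := (hgstep (2*k) ihk.1).2
          exact ⟨h2, (hgstep (2*k+2) h2).1⟩
      have hneven : n % 2 = 0 := by
        by_contra hodd
        obtain ⟨k, hk⟩ : ∃ k, n = 2*k+1 := ⟨n/2, by omega⟩
        have h1 := (hpar2 k).2
        rw [show 2*k+1 = 0 + n by omega, show 2*k+2 = 1 + n by omega, hgper 0, hgper 1] at h1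
        have hA := hO.1 _ _ (hgE 0)
        exact hA.1 (Prod.ext h1 hg0)
      obtain ⟨m, hm⟩ : ∃ m, n = 2*m := ⟨n/2, by omega⟩
      have hm2 : 1 ≤ m := by omega
      exact GOS.noSystem m X Y (o.mkGOS huso) (fun i => (g (2*i)).1) (fun i => (g (2*i)).2)
        hm2
        (fun i => by
          show (g (2*(i+m))).1 = (g (2*i)).1
          rw [show 2*(i+m) = 2*i + n by omega, hgper (2*i)])
        (fun i => by
          show (g (2*(i+m))).2 = (g (2*i)).2
          rw [show 2*(i+m) = 2*i + n by omega, hgper (2*i)])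
        (fun i => by
          show o.out ((g (2*i)).1, (g (2*i)).2) ((g (2*(i+1))).1, (g (2*i)).2) = true
          have h1 : ((g (2*(i+1))).1, (g (2*i)).2) = g (2*i+1) := by
            rw [show 2*(i+1) = 2*i+2 by omega]
            exact Prod.ext (hpar2 i).2.symm (hpar2 i).1
          rw [h1]
          exact hgE (2*i))
        (fun i => by
          show o.out ((g (2*(i+1))).1, (g (2*i)).2) ((g (2*(i+1))).1, (g (2*(i+1))).2) = true
          have h1 : ((g (2*(i+1))).1, (g (2*i)).2) = g (2*i+1) := by
            rw [show 2*(i+1) = 2*i+2 by omega]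
            exact Prod.ext (hpar2 i).2.symm (hpar2 i).1
          rw [h1, show 2*(i+1) = 2*i+2 by omega]
          exact hgE (2*i+1))
    by_cases hH0 : (f 0).2 = (f 1).2
    · exact main f hE hper hstep hH0
    · have hV0 : (f 0).1 = (f 1).1 := by
        rcases hHV 0 with ⟨hb, -⟩ | ⟨ha, -⟩
        · exact absurd hb hH0
        · exact ha
      have hH1 : (f 1).2 = (f 2).2 := by
        rcases hHV 1 with ⟨hb, -⟩ | ⟨ha, -⟩
        · exact hb
        · exact absurd ⟨hV0, ha⟩ (hnV 0)
      exact main (fun i => f (i+1)) (fun i => hE (i+1))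
        (fun i => by show f (i + n + 1) = f (i+1); rw [show i+n+1 = i+1+n by omega, hper (i+1)])
        (fun i h => hstep (i+1) h)
        hH1

lemma no_reach_self (huso : o.IsUSO) (w : X × Y) : ¬ o.Reaches w w := by
  intro h
  have hpath : ∀ v, o.Reaches w v → ∃ n, 1 ≤ n ∧ ∃ g : ℕ → X × Y,
      g 0 = w ∧ g n = v ∧ ∀ i, i < n → o.out (g i) (g (i+1)) = true := by
    intro v hv
    induction hv with
    | single hb =>
      rename_i b
      refine ⟨1, le_refl 1, fun i => if i = 0 then w else b, by simp, by simp, ?_⟩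
      intro i hi
      have hieq : i = 0 := by omega
      subst hieq
      simpa using hb
    | tail hab hbc ih =>
      rename_i b c
      obtain ⟨n, hn1, g, hg0, hgn, hgE⟩ := ih
      refine ⟨n+1, by omega, fun i => if i ≤ n then g i else c, ?_, ?_, ?_⟩
      · simp [hg0]
      · simp
      · intro i hi
        show o.out (if i ≤ n then g i else c) (if i + 1 ≤ n then g (i+1) else c) = true
        rcases Nat.lt_or_ge i n with hlt | hge
        · rw [if_pos (by omega : i ≤ n), if_pos (by omega : i + 1 ≤ n)]
          exact hgE i hlt
        · have hieq : i = n := by omega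
          subst hieq
          rw [if_pos (le_refl i), if_neg (by omega), hgn]
          exact hbc
  obtain ⟨n, hn1, g, hg0, hgn, hgE⟩ := hpath w h
  refine o.noWalk huso n hn1 (fun i => g (i % n)) ?_ ?_
  · intro i
    have hlt : i % n < n := Nat.mod_lt _ (by omega)
    show o.out (g (i % n)) (g ((i+1) % n)) = true
    have hsplit : (i+1) % n = (i % n + 1) % n := by
      conv_lhs => rw [show i + 1 = (i % n + 1) + n * (i / n) by
        rw [Nat.add_right_comm, Nat.mod_add_div i n]]
      rw [Nat.add_mul_mod_self_left]
    rcases Nat.lt_or_ge (i % n + 1) n with h' | h'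
    · rw [hsplit, Nat.mod_eq_of_lt h']
      exact hgE _ hlt
    · have hin : i % n + 1 = n := by omega
      rw [hsplit, hin, Nat.mod_self]
      have h2 := hgE (i % n) hlt
      rw [hin, hgn] at h2
      rw [hg0]
      exact h2
  · intro i
    show g ((i + n) % n) = g (i % n)
    rw [Nat.add_mod_right]

end GridOrientation

/-- In a grid USO, if `w →⁺ v` for `v = (x, y)`, then at least one
coordinate of `v` belongs to the outmap of `w`: `x ∈ Φ_X(w)` or `y ∈ Φ_Y(w)`. -/
theorem coord_in_outmap_of_reaches
    {X Y : Type} [Fintype X] [Fintype Y] [DecidableEq X] [DecidableEq Y]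
    (hX : 2 ≤ Fintype.card X) (hY : 2 ≤ Fintype.card Y)
    (o : GridOrientation X Y) (huso : o.IsUSO)
    (x : X) (y : Y) (w : X × Y)
    (h : o.Reaches w (x, y)) :
    x ∈ o.phiX w ∨ y ∈ o.phiY w := by
  classical
  by_contra hcon
  push_neg at hcon
  obtain ⟨hx, hy⟩ := hcon
  have hO := huso.1
  have hx' : ¬ o.out w (x, w.2) = true := by
    intro hh
    exact hx (by simp [GridOrientation.phiX, hh])
  have hy' : ¬ o.out w (w.1, y) = true := by
    intro hh
    exact hy (by simp [GridOrientation.phiY, hh])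
  by_cases hxe : x = w.1
  · by_cases hye : y = w.2
    · have hvw : ((x, y) : X × Y) = w := Prod.ext hxe hye
      rw [hvw] at h
      exact o.no_reach_self huso w h
    · have hadj : GridOrientation.Adj w (w.1, y) :=
        ⟨fun hh => hye (congrArg Prod.snd hh).symm, Or.inl rfl⟩
      have hu : o.out (w.1, y) w = true := o.out_total hO hadj hy'
      have hvw : ((x, y) : X × Y) = (w.1, y) := by rw [hxe]
      rw [hvw] at h
      exact o.no_reach_self huso w (h.tail hu)
  · by_cases hye : y = w.2
    · have hadj : GridOrientation.Adj w (x, w.2) :=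
        ⟨fun hh => hxe (congrArg Prod.fst hh).symm, Or.inr rfl⟩
      have hu : o.out (x, w.2) w = true := o.out_total hO hadj hx'
      have hvw : ((x, y) : X × Y) = (x, w.2) := by rw [hye]
      rw [hvw] at h
      exact o.no_reach_self huso w (h.tail hu)
    · by_cases hv1 : o.out (x,y) (x, w.2) = true
      · have hadj : GridOrientation.Adj w (x, w.2) :=
          ⟨fun hh => hxe (congrArg Prod.fst hh).symm, Or.inr rfl⟩
        have hu : o.out (x, w.2) w = true := o.out_total hO hadj hx'
        exact o.no_reach_self huso w ((h.tail hv1).tail hu)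
      by_cases hv2 : o.out (x,y) (w.1, y) = true
      · have hadj : GridOrientation.Adj w (w.1, y) :=
          ⟨fun hh => hye (congrArg Prod.snd hh).symm, Or.inl rfl⟩
        have hu : o.out (w.1, y) w = true := o.out_total hO hadj hy'
        exact o.no_reach_self huso w ((h.tail hv2).tail hu)
      obtain ⟨s, -, hus⟩ := huso.2 {w.1, x} {w.2, y} ⟨w.1, by simp⟩ ⟨w.2, by simp⟩
      have h1 : o.IsFaceSink {w.1, x} {w.2, y} w := by
        refine ⟨by simp, by simp, ?_⟩
        rintro ⟨u1, u2⟩ hu1 hu2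
        simp only [Finset.mem_insert, Finset.mem_singleton] at hu1 hu2
        rcases hu1 with rfl | rfl <;> rcases hu2 with rfl | rfl
        · exact fun hh => o.out_irrefl hO w hh
        · exact hy'
        · exact hx'
        · intro hh
          rcases (hO.1 _ _ hh).2 with he | he
          · exact hxe he.symm
          · exact hye he.symm
      have h2 : o.IsFaceSink {w.1, x} {w.2, y} (x, y) := by
        refine ⟨by simp, by simp, ?_⟩
        rintro ⟨u1, u2⟩ hu1 hu2
        simp only [Finset.mem_insert, Finset.mem_singleton] at hu1 hu2
        rcases hu1 with rfl | rfl <;> rcases hu2 with rfl | rfl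
        · intro hh
          rcases (hO.1 _ _ hh).2 with he | he
          · exact hxe he
          · exact hye he
        · exact hv2
        · exact hv1
        · exact o.out_irrefl hO _
      have e1 := hus _ h1
      have e2 := hus _ h2
      rw [← e2] at e1
      exact hxe (congrArg Prod.fst e1).symm
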